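/- Let T_n : M_n(ℂ) → M_n(ℂ) be the triangular projection, (a_{ij}) ↦ (a_{ij} 1_{i ≤ j}). Then there is an absolute constant c > 0 such that the norm of T_n as an operator on (M_n(ℂ), operator norm) is at least c · log n for all n ≥ 2. -/

import Mathlib

open Complex Finset Real

noncomputable def eN (N : ℕ) (m : ℤ) : ℂ := Complex.exp (2 * Real.pi * Complex.I / N * m)

lemma eN_add (N : ℕ) (a b : ℤ) : eN N (a + b) = eN N a * eN N b := by
  unfold eN; rw [← Complex.exp_add]; push_cast; ring_nf

lemma eN_nat_mul (N : ℕ) (m : ℤ) (t : ℕ) : eN N (m * t) = (eN N m) ^ t := by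
  unfold eN; rw [← Complex.exp_nat_mul]; push_cast; ring_nf

lemma eN_eq_one_iff (N : ℕ) (hN : 0 < N) (m : ℤ) : eN N m = 1 ↔ (N : ℤ) ∣ m := by
  have hN' : (N : ℂ) ≠ 0 := by exact_mod_cast hN.ne'
  have h2 : (2 : ℂ) * Real.pi * Complex.I ≠ 0 := by
    simp [Real.pi_ne_zero, Complex.I_ne_zero, Complex.ofReal_ne_zero]
  unfold eN
  rw [Complex.exp_eq_one_iff]
  constructor
  · rintro ⟨k, hk⟩
    refine ⟨k, ?_⟩
    field_simp at hk
    have h3 : 2 * (Real.pi:ℂ) * Complex.I * m = 2 * Real.pi * Complex.I * (k * N) := by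
      rw [hk]; ring
    have := mul_left_cancel₀ h2 h3
    rw [mul_comm] at this; exact_mod_cast this
  · rintro ⟨k, rfl⟩
    refine ⟨k, ?_⟩
    field_simp
    push_cast; ring

lemma eN_pow_N (N : ℕ) (hN : 0 < N) (m : ℤ) : (eN N m) ^ N = 1 := by
  rw [← eN_nat_mul, mul_comm]
  rw [eN_eq_one_iff N hN]
  exact ⟨m, rfl⟩

lemma eN_conj (N : ℕ) (m : ℤ) : (starRingEnd ℂ) (eN N m) = eN N (-m) := by
  unfold eN
  rw [← Complex.exp_conj]
  congr 1
  simp [Complex.conj_I, map_div₀, map_mul, map_ofNat, Complex.conj_ofReal]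
  push_cast
  ring

/-- Orthogonality of characters. -/
lemma eN_orth (N : ℕ) (hN : 0 < N) (m : ℤ) :
    ∑ t ∈ Finset.range N, eN N (m * t) = if (N : ℤ) ∣ m then (N : ℂ) else 0 := by
  simp_rw [eN_nat_mul]
  by_cases h : (N : ℤ) ∣ m
  · rw [if_pos h, (eN_eq_one_iff N hN m).2 h]
    simp
  · rw [if_neg h]
    have h1 : eN N m ≠ 1 := fun hh => h ((eN_eq_one_iff N hN m).1 hh)
    rw [geom_sum_eq h1, eN_pow_N N hN]
    simp

lemma eN_parseval (N : ℕ) (hN : 0 < N) (s : ℤ) (hs : s = 1 ∨ s = -1) (w : ℕ → ℂ) :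
    ∑ j ∈ Finset.range N, Complex.normSq (∑ t ∈ Finset.range N, w t * eN N (s * j * t))
      = N * ∑ t ∈ Finset.range N, Complex.normSq (w t) := by
  have key : ∀ j, ((Complex.normSq (∑ t ∈ Finset.range N, w t * eN N (s * j * t)) : ℝ) : ℂ)
      = ∑ t ∈ Finset.range N, ∑ t' ∈ Finset.range N,
          w t * (starRingEnd ℂ) (w t') * eN N (s * ((t : ℤ) - t') * j) := by
    intro j
    rw [← Complex.mul_conj]
    rw [map_sum, Finset.sum_mul_sum]
    refine Finset.sum_congr rfl fun t _ => Finset.sum_congr rfl fun t' _ => ?_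
    rw [map_mul, eN_conj,
      show s * ((t : ℤ) - t') * j = s * j * t + -(s * j * t') by ring, eN_add]
    ring
  have main : ∑ j ∈ Finset.range N,
      ((Complex.normSq (∑ t ∈ Finset.range N, w t * eN N (s * j * t)) : ℝ) : ℂ)
      = (N : ℂ) * ∑ t ∈ Finset.range N, ((Complex.normSq (w t) : ℝ) : ℂ) := by
    simp_rw [key]
    rw [Finset.sum_comm]
    have inner : ∀ t ∈ Finset.range N, ∑ j ∈ Finset.range N, ∑ t' ∈ Finset.range N,
        w t * (starRingEnd ℂ) (w t') * eN N (s * ((t : ℤ) - t') * j)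
        = (N : ℂ) * Complex.normSq (w t) := by
      intro t ht
      rw [Finset.sum_comm]
      have : ∀ t' ∈ Finset.range N, ∑ j ∈ Finset.range N,
          w t * (starRingEnd ℂ) (w t') * eN N (s * ((t : ℤ) - t') * j)
          = if t' = t then (N : ℂ) * Complex.normSq (w t) else 0 := by
        intro t' ht'
        rw [← Finset.mul_sum, eN_orth N hN]
        by_cases h : t' = t
        · subst h
          simp [Complex.mul_conj]
          ring
        · have hnd : ¬ ((N : ℤ) ∣ s * ((t : ℤ) - t')) := by
            intro hdvd
            have hz : s * ((t : ℤ) - t') = 0 := by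
              refine Int.eq_zero_of_dvd_of_natAbs_lt_natAbs hdvd ?_
              have habs : (s * ((t : ℤ) - t')).natAbs = ((t : ℤ) - t').natAbs := by
                rcases hs with rfl | rfl <;> simp <;> omega
              rw [habs]
              have h1 : (t : ℤ) - t' < N := by
                have := Finset.mem_range.mp ht
                omega
              have h2 : -(N : ℤ) < (t : ℤ) - t' := by
                have := Finset.mem_range.mp ht'
                omega
              omega
            have : (t : ℤ) = t' := by
              rcases hs with rfl | rfl <;> omega
            exact h (by exact_mod_cast this.symm)
          rw [if_neg hnd, mul_zero, if_neg h]
      rw [Finset.sum_congr rfl this, Finset.sum_ite_eq' (Finset.range N) t]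
      simp [ht]
    rw [Finset.sum_congr rfl inner, ← Finset.mul_sum]
  have := main
  rw [← Complex.ofReal_sum] at this
  rw [show ((N : ℂ) * ∑ t ∈ Finset.range N, ((Complex.normSq (w t) : ℝ) : ℂ))
      = (((N : ℝ) * ∑ t ∈ Finset.range N, Complex.normSq (w t) : ℝ) : ℂ) by push_cast; ring] at this
  exact_mod_cast this

lemma sum_range_mul_pow (z : ℂ) (K : ℕ) :
    (z - 1) * ∑ t ∈ Finset.range K, (t : ℂ) * z ^ t
      = ((K : ℂ) - 1) * z ^ K - ∑ t ∈ Finset.range K, z ^ t + 1 := by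
  induction K with
  | zero => simp
  | succ K ih =>
    rw [Finset.sum_range_succ, Finset.sum_range_succ (f := fun t => z ^ t), mul_add, ih]
    push_cast
    ring

noncomputable def phiN (N : ℕ) (t : ℕ) : ℂ :=
  (((2 * Real.pi * t - Real.pi * N) / N : ℝ) : ℂ) * Complex.I

noncomputable def dd (N : ℕ) (m : ℤ) : ℂ :=
  (N : ℂ)⁻¹ * ∑ t ∈ Finset.range N, phiN N t * eN N (m * t)

lemma normSq_phiN_le (N : ℕ) (hN : 0 < N) (t : ℕ) (ht : t ≤ N) :
    Complex.normSq (phiN N t) ≤ Real.pi ^ 2 := by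
  unfold phiN
  rw [Complex.normSq_mul, Complex.normSq_I, mul_one, Complex.normSq_ofReal]
  have h1 : |(2 * Real.pi * t - Real.pi * N) / N| ≤ Real.pi := by
    rw [abs_div, _root_.abs_of_nonneg (by positivity : (0:ℝ) ≤ (N:ℝ))]
    rw [div_le_iff₀ (by positivity : (0:ℝ) < (N:ℝ))]
    have h2 : (0:ℝ) ≤ 2 * Real.pi * t := by positivity
    have h3 : 2 * Real.pi * t ≤ 2 * Real.pi * N := by
      have := Real.pi_pos
      have : (t:ℝ) ≤ N := by exact_mod_cast ht
      nlinarith [Real.pi_pos]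
    rw [abs_le]
    constructor <;> nlinarith [Real.pi_pos]
  have h2 := abs_nonneg ((2 * Real.pi * t - Real.pi * N) / N)
  have h3 : ((2 * Real.pi * t - Real.pi * N) / N) * ((2 * Real.pi * t - Real.pi * N) / N)
      = |(2 * Real.pi * t - Real.pi * N) / N| ^ 2 := by
    rw [_root_.sq_abs]; ring
  rw [h3]
  nlinarith

lemma dd_formula (N : ℕ) (hN : 0 < N) (m : ℤ) (h1 : ¬ (N : ℤ) ∣ m) :
    dd N m = 2 * Real.pi * Complex.I / (N * (eN N m - 1)) := by
  have hN' : (N : ℂ) ≠ 0 := by exact_mod_cast hN.ne'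
  set z := eN N m with hz
  have hz1 : z ≠ 1 := fun hh => h1 ((eN_eq_one_iff N hN m).1 hh)
  have hzsub : z - 1 ≠ 0 := sub_ne_zero.mpr hz1
  have hzN : z ^ N = 1 := eN_pow_N N hN m
  have hgeom : ∑ t ∈ Finset.range N, z ^ t = 0 := by
    have := eN_orth N hN m
    rw [if_neg h1] at this
    simpa [eN_nat_mul] using this
  have hsum : ∑ t ∈ Finset.range N, (t : ℂ) * z ^ t = N / (z - 1) := by
    have h2 := sum_range_mul_pow z N
    rw [hzN, hgeom] at h2
    rw [eq_div_iff hzsub, mul_comm]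
    rw [h2]; ring
  have hphi : ∀ t ∈ Finset.range N, phiN N t * eN N (m * t)
      = (2 * Real.pi * Complex.I / N) * ((t:ℂ) * z ^ t) - Real.pi * Complex.I * z ^ t := by
    intro t ht
    rw [eN_nat_mul]
    unfold phiN
    push_cast
    field_simp
    ring
  unfold dd
  rw [Finset.sum_congr rfl hphi, Finset.sum_sub_distrib, ← Finset.mul_sum, ← Finset.mul_sum,
    hsum, hgeom]
  field_simp
  simp

lemma dd_re_zero (N : ℕ) : (dd N 0).re = 0 := by
  unfold dd
  have h : ∀ t ∈ Finset.range N, phiN N t * eN N (0 * t)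
      = (((2 * Real.pi * t - Real.pi * N) / N : ℝ) : ℂ) * Complex.I := by
    intro t _
    rw [zero_mul]
    unfold eN phiN
    push_cast
    simp
  rw [Finset.sum_congr rfl h, ← Finset.sum_mul, ← Complex.ofReal_sum]
  simp

lemma cot_bound {x : ℝ} (hx0 : 0 < x) (hx2 : x < Real.pi / 2) :
    1 / x - x / 2 ≤ Real.cos x / Real.sin x := by
  have hsin : 0 < Real.sin x := Real.sin_pos_of_pos_of_lt_pi hx0
    (lt_trans hx2 (by linarith [Real.pi_pos]))
  have hcos : 0 ≤ Real.cos x := Real.cos_nonneg_of_mem_Icc ⟨by linarith, le_of_lt hx2⟩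
  by_cases h : x ^ 2 ≤ 2
  · have h1 : 0 ≤ 1 - x ^ 2 / 2 := by linarith
    have h2 : 1 - x ^ 2 / 2 ≤ Real.cos x := Real.one_sub_sq_div_two_le_cos
    have h3 : Real.sin x ≤ x := Real.sin_le hx0.le
    have key : (1 - x ^ 2 / 2) / x ≤ Real.cos x / Real.sin x := by
      calc (1 - x ^ 2 / 2) / x ≤ (1 - x ^ 2 / 2) / Real.sin x := by gcongr
        _ ≤ Real.cos x / Real.sin x := by gcongr
    have : 1 / x - x / 2 = (1 - x ^ 2 / 2) / x := by field_simp
    linarith [this ▸ key]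
  · have : 1 / x - x / 2 = (2 - x ^ 2) / (2 * x) := by field_simp
    rw [this]
    have hneg : (2 - x ^ 2) / (2 * x) ≤ 0 := by
      apply div_nonpos_of_nonpos_of_nonneg <;> nlinarith
    exact le_trans hneg (by positivity)

lemma dd_re_ge (n : ℕ) (hn : 2 ≤ n) (m : ℕ) (h0 : 0 < m) (hm : m < n) :
    1 / (m : ℝ) - Real.pi ^ 2 * m / (2 * (2 * n : ℕ) ^ 2) ≤ (dd (2 * n) m).re := by
  set N : ℕ := 2 * n with hNdef
  have hN : 0 < N := by omega
  have hN' : (N : ℝ) ≠ 0 := by positivity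
  have hmN : m < N := by omega
  have hnd : ¬ ((N : ℤ) ∣ (m : ℤ)) := by
    intro h
    have := Int.eq_zero_of_dvd_of_natAbs_lt_natAbs h (by simpa using hmN)
    omega
  have hform := dd_formula N hN m hnd
  set θ : ℝ := 2 * Real.pi * m / N with hθ
  have hzval : eN N (m : ℤ) = Complex.exp ((θ : ℂ) * Complex.I) := by
    unfold eN
    congr 1
    rw [hθ]
    have hNC : (N : ℂ) ≠ 0 := by exact_mod_cast (by positivity : (N:ℝ) ≠ 0)
    push_cast
    field_simp

  have hz : eN N (m : ℤ) = ⟨Real.cos θ, Real.sin θ⟩ := by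
    rw [hzval, Complex.exp_mul_I]
    simp [Complex.ext_iff, Complex.cos_ofReal_re, Complex.sin_ofReal_re]
  -- compute the real part
  set x : ℝ := Real.pi * m / N with hx
  have hθx : θ = 2 * x := by rw [hθ, hx]; ring
  have hx0 : 0 < x := by
    rw [hx]; positivity
  have hx2 : x < Real.pi / 2 := by
    rw [hx]
    rw [div_lt_div_iff₀ (by positivity) (by norm_num)]
    have : (m : ℝ) < n := by exact_mod_cast hm
    have : (N : ℝ) = 2 * n := by exact_mod_cast rfl
    nlinarith [Real.pi_pos]
  have hsinx : 0 < Real.sin x := Real.sin_pos_of_pos_of_lt_pi hx0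
    (lt_trans hx2 (by linarith [Real.pi_pos]))
  have hsincos : Real.sin θ = 2 * Real.sin x * Real.cos x := by
    rw [hθx, Real.sin_two_mul]
  have hcosθ : 1 - Real.cos θ = 2 * Real.sin x ^ 2 := by
    rw [hθx, Real.cos_two_mul]
    have := Real.sin_sq_add_cos_sq x
    nlinarith
  have hre : (dd N (m : ℤ)).re = Real.pi * Real.cos x / (N * Real.sin x) := by
    rw [hform]
    rw [Complex.div_re]
    have hreden : ((N : ℂ) * (eN N (m : ℤ) - 1)).re = (N : ℝ) * (Real.cos θ - 1) := by
      rw [hz]; simp [Complex.mul_re]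
    have himden : ((N : ℂ) * (eN N (m : ℤ) - 1)).im = (N : ℝ) * Real.sin θ := by
      rw [hz]; simp [Complex.mul_im]
    have hrenum : (2 * (Real.pi : ℂ) * Complex.I).re = 0 := by simp
    have himnum : (2 * (Real.pi : ℂ) * Complex.I).im = 2 * Real.pi := by simp
    have hsq : (Real.cos θ - 1) ^ 2 + Real.sin θ ^ 2 = 4 * Real.sin x ^ 2 := by
      nlinarith [Real.sin_sq_add_cos_sq θ, hcosθ]
    have hnsq : Complex.normSq ((N : ℂ) * (eN N (m : ℤ) - 1))
        = (N : ℝ) ^ 2 * (2 * Real.sin x ^ 2 * 2) := by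
      rw [Complex.normSq_apply, hreden, himden]
      calc (N:ℝ) * (Real.cos θ - 1) * ((N:ℝ) * (Real.cos θ - 1)) + (N:ℝ) * Real.sin θ * ((N:ℝ) * Real.sin θ)
          = (N:ℝ)^2 * ((Real.cos θ - 1)^2 + Real.sin θ^2) := by ring
        _ = (N:ℝ)^2 * (2 * Real.sin x ^ 2 * 2) := by rw [hsq]; ring
    rw [hrenum, himnum, hreden, himden, hnsq, hsincos]
    have hs : Real.sin x ≠ 0 := ne_of_gt hsinx
    field_simp
    ring
  rw [hre]
  have hkey := cot_bound hx0 hx2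
  have e1 : Real.pi * Real.cos x / (N * Real.sin x)
      = (Real.pi / N) * (Real.cos x / Real.sin x) := by
    field_simp
  have e2 : 1 / (m : ℝ) - Real.pi ^ 2 * m / (2 * (N:ℝ) ^ 2)
      = (Real.pi / N) * (1 / x - x / 2) := by
    rw [hx]
    have hm' : (m : ℝ) ≠ 0 := by positivity
    field_simp

  have hπN : 0 < Real.pi / N := by positivity
  have : (Real.pi / N) * (1 / x - x / 2) ≤ (Real.pi / N) * (Real.cos x / Real.sin x) := by
    exact mul_le_mul_of_nonneg_left hkey hπN.le
  rw [e1]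
  calc 1 / (m : ℝ) - Real.pi ^ 2 * m / (2 * (N : ℕ) ^ 2)
      = (Real.pi / N) * (1 / x - x / 2) := by rw [← e2]
    _ ≤ (Real.pi / N) * (Real.cos x / Real.sin x) := this

lemma sum_dd_re_ge (n : ℕ) (hn : 2 ≤ n) (M : ℕ) (hM1 : 1 ≤ M) (hMn : M ≤ n) :
    Real.log M - 2 ≤ ∑ i ∈ Finset.range M, (dd (2 * n) (i : ℤ)).re := by
  obtain ⟨K, rfl⟩ : ∃ K, M = K + 1 := ⟨M - 1, by omega⟩
  rw [Finset.sum_range_succ' (fun i => (dd (2 * n) (i : ℤ)).re) K]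
  rw [show ((0 : ℕ) : ℤ) = 0 by norm_num, dd_re_zero, add_zero]
  have hterm : ∀ i ∈ Finset.range K,
      1 / ((i : ℝ) + 1) - 2 / n ≤ (dd (2 * n) ((i : ℕ) + 1 : ℕ)).re := by
    intro i hi
    have hi' := Finset.mem_range.mp hi
    have h1 := dd_re_ge n hn (i + 1) (by omega) (by omega)
    have h2 : Real.pi ^ 2 * ((i : ℕ) + 1 : ℕ) / (2 * ((2 * n : ℕ) : ℝ) ^ 2) ≤ 2 / n := by
      have hπ : Real.pi ^ 2 ≤ 16 := by
        nlinarith [Real.pi_lt_d2, Real.pi_pos]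
      have hn' : (0:ℝ) < n := by positivity
      have hi1 : ((i:ℝ) + 1) ≤ n := by
        have : (i:ℝ) + 1 ≤ K + 1 := by exact_mod_cast Nat.succ_le_succ hi'.le
        have : ((K:ℝ) + 1) ≤ n := by exact_mod_cast hMn
        linarith [this, (show (i:ℝ) + 1 ≤ K + 1 by exact_mod_cast Nat.succ_le_succ hi'.le)]
      have hcast : ((2 * n : ℕ) : ℝ) = 2 * n := by push_cast; ring
      rw [hcast]
      rw [div_le_div_iff₀ (by positivity) hn']
      push_cast
      have p1 : Real.pi^2 * (((i:ℝ)+1)*n) ≤ 16 * (((i:ℝ)+1)*n) :=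
        mul_le_mul_of_nonneg_right hπ (by positivity)
      have p2 : 16 * (((i:ℝ)+1)*(n:ℝ)) ≤ 16 * ((n:ℝ)*n) := by nlinarith
      nlinarith [p1, p2]
    refine le_trans ?_ h1
    push_cast at h2 ⊢
    linarith
  have hsum : ∑ i ∈ Finset.range K, (1 / ((i : ℝ) + 1) - 2 / n)
      ≤ ∑ i ∈ Finset.range K, (dd (2 * n) ((i : ℕ) + 1 : ℕ)).re := by
    apply Finset.sum_le_sum
    intro i hi
    exact hterm i hi
  have hharm : Real.log ((K : ℝ) + 1) ≤ ∑ i ∈ Finset.range K, 1 / ((i : ℝ) + 1) := by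
    have h := log_add_one_le_harmonic K
    have hcast : ((harmonic K : ℚ) : ℝ) = ∑ i ∈ Finset.range K, 1 / ((i : ℝ) + 1) := by
      unfold harmonic
      push_cast
      simp [one_div]
    rw [hcast] at h
    convert h using 2
    push_cast
    ring
  have hKn : (K : ℝ) ≤ n - 1 := by
    have : (K:ℝ) + 1 ≤ n := by exact_mod_cast hMn
    linarith
  have hcount : ∑ i ∈ Finset.range K, (2 / (n:ℝ)) ≤ 2 := by
    have hn' : (0:ℝ) < n := by positivity
    have hKn' : (K:ℝ) ≤ n := by linarith
    calc ∑ _i ∈ Finset.range K, (2 / (n:ℝ)) = (K:ℝ) * (2 / n) := by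
          rw [Finset.sum_const, Finset.card_range, nsmul_eq_mul]
      _ ≤ (n:ℝ) * (2 / n) := by gcongr
      _ = 2 := by field_simp
  have hfinal : Real.log ((K:ℝ) + 1) - 2 ≤ ∑ i ∈ Finset.range K, (dd (2 * n) ((i : ℕ) + 1 : ℕ)).re := by
    have hsplit : ∑ i ∈ Finset.range K, (1 / ((i : ℝ) + 1) - 2 / n)
        = (∑ i ∈ Finset.range K, 1 / ((i : ℝ) + 1)) - ∑ i ∈ Finset.range K, (2 / (n:ℝ)) := by
      rw [Finset.sum_sub_distrib]
    linarith [hsum, hharm, hcount, hsplit ▸ hsum]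
  have hcast2 : Real.log ((K + 1 : ℕ) : ℝ) = Real.log ((K:ℝ)+1) := by push_cast; ring_nf
  rw [hcast2]
  convert hfinal using 2

lemma S_ge (n : ℕ) (hn : 2 ≤ n) (hlog : 1 ≤ Real.log n) :
    ((n / 2 : ℕ) : ℝ) * (Real.log n - 1) - 2 * n
      ≤ ∑ j ∈ Finset.range n, ∑ k ∈ Finset.range n,
          (if j ≤ k then (dd (2 * n) ((k : ℤ) - (j : ℤ))).re else 0) := by
  have hinner : ∀ j ∈ Finset.range n,
      ∑ k ∈ Finset.range n, (if j ≤ k then (dd (2 * n) ((k : ℤ) - (j : ℤ))).re else 0)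
        = ∑ i ∈ Finset.range (n - j), (dd (2 * n) (i : ℤ)).re := by
    intro j hj
    rw [Finset.sum_ite, Finset.sum_const_zero, add_zero]
    have hfilter : Finset.filter (fun k => j ≤ k) (Finset.range n) = Finset.Ico j n := by
      ext k
      simp [Finset.mem_filter, Finset.mem_range, Finset.mem_Ico]
      omega
    rw [hfilter, Finset.sum_Ico_eq_sum_range]
    refine Finset.sum_congr rfl fun i _ => ?_
    congr 1
    push_cast
    ring
  rw [Finset.sum_congr rfl hinner]
  have hlower : ∀ j ∈ Finset.range n,
      (if j < n / 2 then Real.log n - 1 else 0) - 2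
        ≤ ∑ i ∈ Finset.range (n - j), (dd (2 * n) (i : ℤ)).re := by
    intro j hj
    have hj' := Finset.mem_range.mp hj
    have h1 : Real.log ((n - j : ℕ) : ℝ) - 2 ≤ ∑ i ∈ Finset.range (n - j), (dd (2 * n) (i : ℤ)).re :=
      sum_dd_re_ge n hn (n - j) (by omega) (by omega)
    refine le_trans ?_ h1
    by_cases hc : j < n / 2
    · rw [if_pos hc]
      have h2 : ((n:ℝ)/2) ≤ ((n - j : ℕ) : ℝ) := by
        have : n - j ≥ n - (n/2 - 1) := by omega
        have hnj : (n : ℝ) - j ≤ ((n - j : ℕ) : ℝ) := by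
          push_cast [Nat.cast_sub hj'.le]
          ring_nf
          exact le_refl _
        have hj2 : (j : ℝ) ≤ (n:ℝ)/2 := by
          have hj3 : (j : ℝ) < ((n/2 : ℕ) : ℝ) := by exact_mod_cast hc
          have : ((n/2 : ℕ) : ℝ) ≤ (n:ℝ)/2 := by
            have := Nat.div_mul_le_self n 2
            have : ((n/2 : ℕ) : ℝ) * 2 ≤ n := by exact_mod_cast Nat.div_mul_le_self n 2
            linarith
          linarith
        linarith
      have h3 : Real.log ((n:ℝ)/2) ≤ Real.log ((n - j : ℕ) : ℝ) :=
        Real.log_le_log (by positivity) h2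
      have h4 : Real.log ((n:ℝ)/2) = Real.log n - Real.log 2 :=
        Real.log_div (by positivity) (by norm_num)
      have h5 : Real.log 2 ≤ 1 := by
        have := Real.log_two_lt_d9
        linarith
      linarith
    · rw [if_neg hc]
      have h6 : (0:ℝ) ≤ Real.log ((n - j : ℕ) : ℝ) := by
        apply Real.log_nonneg
        have : 1 ≤ n - j := by omega
        exact_mod_cast this
      linarith
  have hsumlow := Finset.sum_le_sum hlower
  refine le_trans ?_ hsumlow
  rw [Finset.sum_sub_distrib, Finset.sum_const, Finset.card_range, nsmul_eq_mul]
  have hcount : ∑ j ∈ Finset.range n, (if j < n / 2 then Real.log n - 1 else 0)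
      = ((n / 2 : ℕ) : ℝ) * (Real.log n - 1) := by
    rw [Finset.sum_ite, Finset.sum_const_zero, add_zero, Finset.sum_const, nsmul_eq_mul]
    congr 2
    have : Finset.filter (fun j => j < n / 2) (Finset.range n) = Finset.range (n / 2) := by
      ext j
      simp [Finset.mem_filter, Finset.mem_range]
      omega
    rw [this, Finset.card_range]
  rw [hcount]
  have : (n:ℝ) * 2 = 2 * n := by ring
  linarith

lemma core_bound (N n : ℕ) (hnN : n ≤ N) (hN : 0 < N) (u : ℕ → ℂ) :
    ∑ j ∈ Finset.range n, Complex.normSq (∑ t ∈ Finset.range N,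
        ((N:ℂ)⁻¹ * phiN N t * (∑ k ∈ Finset.range N, u k * eN N ((1:ℤ) * t * k)))
          * eN N ((-1:ℤ) * j * t))
      ≤ Real.pi ^ 2 * ∑ k ∈ Finset.range N, Complex.normSq (u k) := by
  have hNR : (0:ℝ) < (N:ℝ) := by exact_mod_cast hN
  have step1 : ∑ j ∈ Finset.range n, Complex.normSq (∑ t ∈ Finset.range N,
        ((N:ℂ)⁻¹ * phiN N t * (∑ k ∈ Finset.range N, u k * eN N ((1:ℤ) * t * k)))
          * eN N ((-1:ℤ) * j * t))
      ≤ ∑ j ∈ Finset.range N, Complex.normSq (∑ t ∈ Finset.range N,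
        ((N:ℂ)⁻¹ * phiN N t * (∑ k ∈ Finset.range N, u k * eN N ((1:ℤ) * t * k)))
          * eN N ((-1:ℤ) * j * t)) := by
    apply Finset.sum_le_sum_of_subset_of_nonneg (Finset.range_subset_range.mpr hnN)
    intro j _ _
    exact Complex.normSq_nonneg _
  have step2 := eN_parseval N hN (-1) (Or.inr rfl)
    (fun t => (N:ℂ)⁻¹ * phiN N t * (∑ k ∈ Finset.range N, u k * eN N ((1:ℤ) * t * k)))
  have step3 : ∀ t ∈ Finset.range N,
      Complex.normSq ((N:ℂ)⁻¹ * phiN N t * (∑ k ∈ Finset.range N, u k * eN N ((1:ℤ) * t * k)))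
        ≤ ((N:ℝ)⁻¹)^2 * Real.pi ^ 2
            * Complex.normSq (∑ k ∈ Finset.range N, u k * eN N ((1:ℤ) * t * k)) := by
    intro t ht
    rw [Complex.normSq_mul, Complex.normSq_mul]
    have h1 : Complex.normSq ((N:ℂ)⁻¹) = ((N:ℝ)⁻¹)^2 := by
      rw [show ((N:ℂ))⁻¹ = (((N:ℝ)⁻¹ : ℝ) : ℂ) by push_cast; ring, Complex.normSq_ofReal]
      ring
    rw [h1]
    have h2 := normSq_phiN_le N hN t (le_of_lt (Finset.mem_range.mp ht))
    have h3 := Complex.normSq_nonneg (∑ k ∈ Finset.range N, u k * eN N ((1:ℤ) * t * k))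
    have h4 : (0:ℝ) ≤ ((N:ℝ)⁻¹)^2 := by positivity
    have h5 := mul_le_mul_of_nonneg_right h2 h3
    have h6 := mul_le_mul_of_nonneg_left h5 h4
    nlinarith [h6]
  have step4 := eN_parseval N hN 1 (Or.inl rfl) u
  calc ∑ j ∈ Finset.range n, Complex.normSq (∑ t ∈ Finset.range N,
        ((N:ℂ)⁻¹ * phiN N t * (∑ k ∈ Finset.range N, u k * eN N ((1:ℤ) * t * k)))
          * eN N ((-1:ℤ) * j * t))
      ≤ ∑ j ∈ Finset.range N, Complex.normSq (∑ t ∈ Finset.range N,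
        ((N:ℂ)⁻¹ * phiN N t * (∑ k ∈ Finset.range N, u k * eN N ((1:ℤ) * t * k)))
          * eN N ((-1:ℤ) * j * t)) := step1
    _ = N * ∑ t ∈ Finset.range N,
          Complex.normSq ((N:ℂ)⁻¹ * phiN N t * (∑ k ∈ Finset.range N, u k * eN N ((1:ℤ) * t * k))) := step2
    _ ≤ N * ∑ t ∈ Finset.range N, ((N:ℝ)⁻¹)^2 * Real.pi ^ 2
            * Complex.normSq (∑ k ∈ Finset.range N, u k * eN N ((1:ℤ) * t * k)) := by
        apply mul_le_mul_of_nonneg_left (Finset.sum_le_sum step3) (by positivity)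
    _ = ((N:ℝ)⁻¹)^2 * Real.pi ^ 2 * N * ∑ t ∈ Finset.range N,
            Complex.normSq (∑ k ∈ Finset.range N, u k * eN N ((1:ℤ) * t * k)) := by
        rw [← Finset.mul_sum]
        ring
    _ = ((N:ℝ)⁻¹)^2 * Real.pi ^ 2 * N * (N * ∑ k ∈ Finset.range N, Complex.normSq (u k)) := by
        rw [step4]
    _ = Real.pi ^ 2 * ∑ k ∈ Finset.range N, Complex.normSq (u k) := by
        field_simp


noncomputable def aMat (n : ℕ) : Matrix (Fin n) (Fin n) ℂ :=
  Matrix.of fun j k => dd (2 * n) ((k : ℤ) - (j : ℤ))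

lemma aMat_norm_le (n : ℕ) (hn : 2 ≤ n) :
    ‖Matrix.toEuclideanCLM (𝕜 := ℂ) (aMat n)‖ ≤ Real.pi := by
  refine ContinuousLinearMap.opNorm_le_bound _ Real.pi_pos.le fun x => ?_
  classical
  set N := 2 * n with hNdef
  have hN : 0 < N := by omega
  have hnN : n ≤ N := by omega
  let u : ℕ → ℂ := fun k => if h : k < n then x ⟨k, h⟩ else 0
  have hXfin : ∀ t : ℕ, (∑ k ∈ Finset.range N, u k * eN N ((1:ℤ) * t * k))
      = ∑ k : Fin n, x k * eN N ((1:ℤ) * t * (k:ℕ)) := by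
    intro t
    have h2 : (∑ k ∈ Finset.range N, u k * eN N ((1:ℤ) * t * k))
        = ∑ k ∈ Finset.range n, u k * eN N ((1:ℤ) * t * k) := by
      symm
      apply Finset.sum_subset (Finset.range_subset_range.mpr hnN)
      intro k _ hk
      have hkn : ¬ k < n := fun h => hk (Finset.mem_range.mpr h)
      simp [u, hkn]
    rw [h2, ← Fin.sum_univ_eq_sum_range (fun k => u k * eN N ((1:ℤ) * t * k)) n]
    exact Finset.sum_congr rfl fun k _ => by simp [u, k.isLt]
  have hcomp : ∀ j : Fin n, (Matrix.toEuclideanCLM (𝕜 := ℂ) (aMat n) x) j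
      = ∑ t ∈ Finset.range N,
          ((N:ℂ)⁻¹ * phiN N t * (∑ k ∈ Finset.range N, u k * eN N ((1:ℤ) * t * k)))
            * eN N ((-1:ℤ) * (j:ℕ) * t) := by
    intro j
    rw [show (Matrix.toEuclideanCLM (𝕜 := ℂ) (aMat n) x) j
        = ∑ k : Fin n, dd N (((k:ℕ):ℤ) - ((j:ℕ):ℤ)) * x k from rfl]
    symm
    calc ∑ t ∈ Finset.range N,
          ((N:ℂ)⁻¹ * phiN N t * (∑ k ∈ Finset.range N, u k * eN N ((1:ℤ) * t * k)))
            * eN N ((-1:ℤ) * (j:ℕ) * t)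
        = ∑ t ∈ Finset.range N, ∑ k : Fin n,
            (N:ℂ)⁻¹ * (phiN N t * (x k * (eN N ((1:ℤ) * t * (k:ℕ)) * eN N ((-1:ℤ) * (j:ℕ) * t)))) := by
          refine Finset.sum_congr rfl fun t _ => ?_
          rw [hXfin t, Finset.mul_sum, Finset.sum_mul]
          exact Finset.sum_congr rfl fun k _ => by ring
      _ = ∑ k : Fin n, ∑ t ∈ Finset.range N,
            (N:ℂ)⁻¹ * (phiN N t * (x k * eN N ((((k:ℕ):ℤ) - ((j:ℕ):ℤ)) * t))) := by
          rw [Finset.sum_comm]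
          refine Finset.sum_congr rfl fun k _ => Finset.sum_congr rfl fun t _ => ?_
          rw [← eN_add, show ((1:ℤ) * t * (k:ℕ) + (-1:ℤ) * (j:ℕ) * t)
            = (((k:ℕ):ℤ) - ((j:ℕ):ℤ)) * t from by ring]
      _ = ∑ k : Fin n, dd N (((k:ℕ):ℤ) - ((j:ℕ):ℤ)) * x k := by
          refine Finset.sum_congr rfl fun k _ => ?_
          unfold dd
          rw [Finset.mul_sum, Finset.sum_mul]
          exact Finset.sum_congr rfl fun t _ => by ring
  -- norms
  have hxsq : ‖x‖ ^ 2 = ∑ k ∈ Finset.range N, Complex.normSq (u k) := by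
    rw [EuclideanSpace.norm_eq, Real.sq_sqrt (by positivity)]
    have h2 : (∑ k ∈ Finset.range N, Complex.normSq (u k))
        = ∑ k ∈ Finset.range n, Complex.normSq (u k) := by
      symm
      apply Finset.sum_subset (Finset.range_subset_range.mpr hnN)
      intro k _ hk
      have hkn : ¬ k < n := fun h => hk (Finset.mem_range.mpr h)
      simp [u, hkn]
    rw [h2, ← Fin.sum_univ_eq_sum_range (fun k => Complex.normSq (u k)) n]
    refine Finset.sum_congr rfl fun k _ => ?_
    simp only [u, k.isLt, dif_pos]
    rw [← Complex.sq_norm]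
  have hAx : ‖Matrix.toEuclideanCLM (𝕜 := ℂ) (aMat n) x‖ ^ 2
      ≤ Real.pi ^ 2 * ‖x‖ ^ 2 := by
    rw [EuclideanSpace.norm_eq, Real.sq_sqrt (by positivity), hxsq]
    have h3 : ∀ j : Fin n, ‖(Matrix.toEuclideanCLM (𝕜 := ℂ) (aMat n) x) j‖ ^ 2
        = Complex.normSq (∑ t ∈ Finset.range N,
          ((N:ℂ)⁻¹ * phiN N t * (∑ k ∈ Finset.range N, u k * eN N ((1:ℤ) * t * k)))
            * eN N ((-1:ℤ) * (j:ℕ) * t)) := by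
      intro j
      rw [hcomp j, ← Complex.sq_norm]
    rw [Finset.sum_congr rfl fun j _ => h3 j]
    rw [Fin.sum_univ_eq_sum_range (fun j => Complex.normSq (∑ t ∈ Finset.range N,
          ((N:ℂ)⁻¹ * phiN N t * (∑ k ∈ Finset.range N, u k * eN N ((1:ℤ) * t * k)))
            * eN N ((-1:ℤ) * j * t))) n]
    exact core_bound N n hnN hN u
  have hpix : (0:ℝ) ≤ Real.pi * ‖x‖ := by positivity
  nlinarith [norm_nonneg (Matrix.toEuclideanCLM (𝕜 := ℂ) (aMat n) x), hAx]

lemma T_lower (n : ℕ) (hn : 2 ≤ n) (hlog : 1 ≤ Real.log n) :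
    ((n / 2 : ℕ) : ℝ) * (Real.log n - 1) - 2 * n
      ≤ (n : ℝ) * ‖Matrix.toEuclideanCLM (𝕜 := ℂ)
          (Matrix.of fun i j : Fin n => if i ≤ j then aMat n i j else 0)‖ := by
  classical
  set Ta : Matrix (Fin n) (Fin n) ℂ := Matrix.of fun i j : Fin n => if i ≤ j then aMat n i j else 0
    with hTa
  set T := Matrix.toEuclideanCLM (𝕜 := ℂ) Ta with hT
  let e : EuclideanSpace ℂ (Fin n) := WithLp.toLp 2 (fun _ => 1)
  have henorm : ‖e‖ = Real.sqrt n := by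
    rw [EuclideanSpace.norm_eq]
    congr 1
    simp [e]
  have hinner : (inner ℂ e (T e) : ℂ) = ∑ j : Fin n, ∑ k : Fin n, Ta j k := by
    rw [PiLp.inner_apply]
    refine Finset.sum_congr rfl fun j _ => ?_
    have h1 : (T e) j = ∑ k : Fin n, Ta j k * e k := rfl
    have h2 : (inner ℂ (e j) ((T e) j) : ℂ) = (starRingEnd ℂ) (e j) * (T e) j := by
      rw [RCLike.inner_apply, mul_comm]
    rw [h2, h1]
    simp [e]
  have hre : (inner ℂ e (T e) : ℂ).re = ∑ j ∈ Finset.range n, ∑ k ∈ Finset.range n,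
      (if j ≤ k then (dd (2 * n) ((k : ℤ) - (j : ℤ))).re else 0) := by
    rw [hinner, Complex.re_sum]
    have hj : ∀ j : Fin n, (∑ k : Fin n, Ta j k).re
        = ∑ k ∈ Finset.range n, (if (j:ℕ) ≤ k then (dd (2 * n) ((k : ℤ) - ((j:ℕ) : ℤ))).re else 0) := by
      intro j
      rw [Complex.re_sum]
      rw [← Fin.sum_univ_eq_sum_range
        (fun k => if (j:ℕ) ≤ k then (dd (2 * n) ((k : ℤ) - ((j:ℕ) : ℤ))).re else 0) n]
      refine Finset.sum_congr rfl fun k _ => ?_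
      have h3 : Ta j k = if j ≤ k then dd (2 * n) (((k:ℕ) : ℤ) - ((j:ℕ) : ℤ)) else 0 := rfl
      rw [h3, apply_ite Complex.re]
      exact if_congr (by rw [Fin.le_def]) rfl rfl
    rw [Finset.sum_congr rfl fun j _ => hj j]
    rw [← Fin.sum_univ_eq_sum_range (fun j => ∑ k ∈ Finset.range n,
      (if j ≤ k then (dd (2 * n) ((k : ℤ) - (j : ℤ))).re else 0)) n]
  have hS := S_ge n hn hlog
  have hCS : (inner ℂ e (T e) : ℂ).re ≤ (n : ℝ) * ‖T‖ := by
    have h1 : (inner ℂ e (T e) : ℂ).re ≤ ‖(inner ℂ e (T e) : ℂ)‖ := Complex.re_le_norm _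
    have h2 : ‖(inner ℂ e (T e) : ℂ)‖ ≤ ‖e‖ * ‖T e‖ := norm_inner_le_norm e (T e)
    have h3 : ‖T e‖ ≤ ‖T‖ * ‖e‖ := T.le_opNorm e
    have h4 : ‖e‖ * (‖T‖ * ‖e‖) = ‖T‖ * (‖e‖ * ‖e‖) := by ring
    have h5 : ‖e‖ * ‖e‖ = n := by
      rw [henorm, Real.mul_self_sqrt (by positivity)]
    calc (inner ℂ e (T e) : ℂ).re ≤ ‖e‖ * ‖T e‖ := le_trans h1 h2
      _ ≤ ‖e‖ * (‖T‖ * ‖e‖) := by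
          apply mul_le_mul_of_nonneg_left h3 (norm_nonneg e)
      _ = (n : ℝ) * ‖T‖ := by rw [h4, h5]; ring
  rw [hre] at hCS
  linarith

/-- **Logarithmic lower bound for the triangular projection.**
Let `T_n : M_n(ℂ) → M_n(ℂ)` be the triangular projection `(a_{ij}) ↦ (a_{ij} 1_{i≤j})`.
There is an absolute constant `c > 0` such that for all `n ≥ 2` the norm of `T_n` as an
operator on `M_n(ℂ)` with the operator norm (as operators on `ℓ²ₙ`) is at least `c log n`;
equivalently, there is a matrix witnessing `‖T_n a‖ ≥ c (log n) ‖a‖`. -/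
theorem triangular_projection_lower :
    ∃ c : ℝ, 0 < c ∧ ∀ n : ℕ, 2 ≤ n →
      ∃ a : Matrix (Fin n) (Fin n) ℂ, a ≠ 0 ∧
        c * Real.log n * ‖Matrix.toEuclideanCLM (𝕜 := ℂ) a‖ ≤
          ‖Matrix.toEuclideanCLM (𝕜 := ℂ)
            (Matrix.of fun i j => if i ≤ j then a i j else 0)‖ := by
  have hπ3 : 3 < Real.pi := Real.pi_gt_three
  refine ⟨(8 * Real.pi)⁻¹, by positivity, ?_⟩
  intro n hn
  have hn1 : (1:ℝ) ≤ (n:ℝ) := by exact_mod_cast le_trans (by norm_num) hn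
  have hlogn : 0 ≤ Real.log n := Real.log_nonneg hn1
  by_cases hcase : Real.log n ≤ 18
  · refine ⟨1, ?_, ?_⟩
    · intro h
      have h0 := congrFun (congrFun h ⟨0, by omega⟩) ⟨0, by omega⟩
      simp [Matrix.one_apply] at h0
    · have hTa : (Matrix.of fun i j : Fin n => if i ≤ j then (1 : Matrix (Fin n) (Fin n) ℂ) i j else 0)
          = (1 : Matrix (Fin n) (Fin n) ℂ) := by
        ext i j
        by_cases h : i = j
        · subst h; simp [Matrix.one_apply]
        · simp [Matrix.one_apply, h]
      rw [hTa, map_one]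
      haveI : Nonempty (Fin n) := ⟨⟨0, by omega⟩⟩
      rw [norm_one, mul_one]
      have h8 : (0:ℝ) < 8 * Real.pi := by positivity
      rw [inv_mul_le_iff₀ h8]
      nlinarith
  · push_neg at hcase
    have hlog1 : 1 ≤ Real.log n := by linarith
    have hT := T_lower n hn hlog1
    have hA := aMat_norm_le n hn
    set L := Real.log n with hL
    set Tn := ‖Matrix.toEuclideanCLM (𝕜 := ℂ)
        (Matrix.of fun i j : Fin n => if i ≤ j then aMat n i j else 0)‖ with hTn
    have hnR : (2:ℝ) ≤ (n:ℝ) := by exact_mod_cast hn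
    have hhalf : ((n:ℝ) - 1)/2 ≤ ((n / 2 : ℕ) : ℝ) := by
      have h1 : n - 1 ≤ 2 * (n / 2) := by omega
      have h2 : ((n:ℝ) - 1) ≤ 2 * ((n/2 : ℕ):ℝ) := by
        have h3 : ((n - 1 : ℕ) : ℝ) ≤ ((2 * (n / 2) : ℕ) : ℝ) := by exact_mod_cast h1
        push_cast at h3
        rw [Nat.cast_sub (by omega)] at h3
        push_cast at h3
        linarith
      linarith
    have hq : ((n:ℝ) - 1)/2 * (L - 1) ≤ ((n / 2 : ℕ) : ℝ) * (L - 1) :=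
      mul_le_mul_of_nonneg_right hhalf (by linarith)
    have hp : 0 ≤ (L - 18) * (3*(n:ℝ) - 4) :=
      mul_nonneg (by linarith) (by linarith)
    have hkey : (n:ℝ) * (L/8) ≤ (n:ℝ) * Tn := by nlinarith [hT, hq, hp]
    have hTlow : L/8 ≤ Tn := by
      have hn0 : (0:ℝ) < n := by linarith
      exact le_of_mul_le_mul_left (by linarith [hkey]) hn0
    have hane : aMat n ≠ 0 := by
      intro h
      have hTa0 : (Matrix.of fun i j : Fin n => if i ≤ j then aMat n i j else 0)
          = (0 : Matrix (Fin n) (Fin n) ℂ) := by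
        ext i j
        simp [h]
      rw [hTn, hTa0, map_zero, norm_zero] at hTlow
      linarith
    refine ⟨aMat n, hane, ?_⟩
    have hstep : (8 * Real.pi)⁻¹ * L * ‖Matrix.toEuclideanCLM (𝕜 := ℂ) (aMat n)‖
        ≤ (8 * Real.pi)⁻¹ * L * Real.pi :=
      mul_le_mul_of_nonneg_left hA (by positivity)
    have heq : (8 * Real.pi)⁻¹ * L * Real.pi = L / 8 := by
      have : Real.pi ≠ 0 := by positivity
      field_simp

    calc (8 * Real.pi)⁻¹ * L * ‖Matrix.toEuclideanCLM (𝕜 := ℂ) (aMat n)‖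
        ≤ L / 8 := by rw [← heq]; exact hstep
      _ ≤ Tn := hTlow
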